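/- For every integer k ≥ 17, no edge coloring of G_k using at most 4 colors makes G_k rainbow connected; that is, rc(G_k) ≥ 5. -/

import Mathlib

/-- Vertex type of the graph `G_k`: the hub `u`, the vertices `v_1,…,v_k`
and the vertices `w_1,…,w_k` (all `2k+1` vertices distinct). -/
abbrev Vk (k : ℕ) : Type := Unit ⊕ Fin k ⊕ Fin k

/-- The hub vertex `u` of `G_k`. -/
def uVtx (k : ℕ) : Vk k := Sum.inl ()

/-- The vertex `v_i` of `G_k`. -/
def vVtx {k : ℕ} (i : Fin k) : Vk k := Sum.inr (Sum.inl i)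

/-- The vertex `w_i` of `G_k`. -/
def wVtx {k : ℕ} (i : Fin k) : Vk k := Sum.inr (Sum.inr i)

/-- The generating relation for the edges of `G_k`: `u ∼ v_i`, `v_i ∼ w_i` and
`w_i ∼ w_j` (the requirement `i ≠ j` is taken care of by `SimpleGraph.fromRel`,
which discards loops). -/
def GkRel (k : ℕ) : Vk k → Vk k → Prop
  | Sum.inl _, Sum.inr (Sum.inl _) => True
  | Sum.inr (Sum.inl i), Sum.inr (Sum.inr j) => i = j
  | Sum.inr (Sum.inr _), Sum.inr (Sum.inr _) => True
  | _, _ => False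

/-- The graph `G_k`: `u` joined to each `v_i`, `v_i` joined to `w_i`, and
`{w_1,…,w_k}` forming a clique. -/
def Gk (k : ℕ) : SimpleGraph (Vk k) := SimpleGraph.fromRel (GkRel k)

/-- A graph `G` with an edge coloring `c` is *rainbow connected* if every pair of distinct
vertices is joined by a path whose edges all receive distinct colors. -/
def RainbowConnected {α β : Type*} (G : SimpleGraph α) (c : Sym2 α → β) : Prop :=
  ∀ x y : α, x ≠ y → ∃ p : G.Walk x y, p.IsPath ∧ (p.edges.map c).Nodup


lemma adj_u {k : ℕ} {x : Vk k} (h : (Gk k).Adj (uVtx k) x) : ∃ l, x = vVtx l := by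
  rw [Gk, SimpleGraph.fromRel_adj] at h
  obtain ⟨hne, h⟩ := h
  rcases x with _ | x | x
  · exact absurd rfl hne
  · exact ⟨x, rfl⟩
  · simp only [GkRel, uVtx] at h; exact absurd h (by simp)

lemma adj_v {k : ℕ} {i : Fin k} {x : Vk k} (h : (Gk k).Adj (vVtx i) x) :
    x = uVtx k ∨ x = wVtx i := by
  rw [Gk, SimpleGraph.fromRel_adj] at h
  obtain ⟨hne, h⟩ := h
  rcases x with _ | x | x
  · left; rfl
  · simp only [GkRel, vVtx] at h; exact absurd h (by simp)
  · right
    simp only [GkRel, vVtx] at h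
    rcases h with h | h
    · rw [h]; rfl
    · exact h.elim

lemma adj_w {k : ℕ} {i : Fin k} {x : Vk k} (h : (Gk k).Adj (wVtx i) x) :
    x = vVtx i ∨ ∃ m, x = wVtx m := by
  rw [Gk, SimpleGraph.fromRel_adj] at h
  obtain ⟨hne, h⟩ := h
  rcases x with _ | x | x
  · simp only [GkRel, wVtx] at h; exact absurd h (by simp)
  · left
    simp only [GkRel, wVtx] at h
    rcases h with h | h
    · exact h.elim
    · rw [h]; rfl
  · exact Or.inr ⟨x, rfl⟩

lemma no_rainbow_path {k : ℕ} (c : Sym2 (Vk k) → Fin 4) {i j : Fin k} (hij : i ≠ j)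
    (h1 : c s(uVtx k, vVtx i) = c s(uVtx k, vVtx j))
    (h2 : c s(vVtx i, wVtx i) = c s(vVtx j, wVtx j))
    (p : (Gk k).Walk (vVtx i) (vVtx j)) (hnd : (p.edges.map c).Nodup) : False := by
  have hlen : p.length ≤ 4 := by
    have := hnd.length_le_card
    simpa [SimpleGraph.Walk.length_edges] using this
  cases p with
  | nil => exact hij rfl
  | cons ha1 q1 =>
    rcases adj_v ha1 with rfl | rfl
    · -- first step to u
      cases q1 with
      | cons ha2 q2 =>
        obtain ⟨l, rfl⟩ := adj_u ha2
        cases q2 with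
        | nil =>
          -- path v_i u v_j : colors of the two edges equal
          have e : c s(vVtx i, uVtx k) = c s(uVtx k, vVtx j) := by
            rw [Sym2.eq_swap]; exact h1
          simp [e] at hnd
        | cons ha3 q3 =>
          rcases adj_v ha3 with rfl | rfl
          · -- back to u: repeated edge
            have e : (s(vVtx l, uVtx k) : Sym2 (Vk k)) = s(uVtx k, vVtx l) :=
              Sym2.eq_swap
            simp [e] at hnd
          · cases q3 with
            | cons ha4 q4 =>
              rcases adj_w ha4 with rfl | ⟨m, rfl⟩
              · have e : (s(wVtx l, vVtx l) : Sym2 (Vk k)) = s(vVtx l, wVtx l) :=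
                  Sym2.eq_swap
                simp [e] at hnd
              · cases q4 with
                | cons ha5 q5 =>
                  simp [SimpleGraph.Walk.length_cons] at hlen; omega
    · -- first step to w_i
      cases q1 with
      | cons ha2 q2 =>
        rcases adj_w ha2 with rfl | ⟨m, rfl⟩
        · have e : (s(wVtx i, vVtx i) : Sym2 (Vk k)) = s(vVtx i, wVtx i) :=
            Sym2.eq_swap
          simp [e] at hnd
        · cases q2 with
          | cons ha3 q3 =>
            rcases adj_w ha3 with rfl | ⟨l, rfl⟩
            · -- to v_m
              cases q3 with
              | nil =>
                -- path v_i w_i w_j v_j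
                have e : c s(vVtx i, wVtx i) = c s(wVtx j, vVtx j) := by
                  rw [Sym2.eq_swap (a := wVtx j) (b := vVtx j)]; exact h2
                simp [e] at hnd
              | cons ha4 q4 =>
                rcases adj_v ha4 with rfl | rfl
                · cases q4 with
                  | cons ha5 q5 =>
                    simp [SimpleGraph.Walk.length_cons] at hlen; omega
                · have e : (s(wVtx m, vVtx m) : Sym2 (Vk k)) = s(vVtx m, wVtx m) :=
                    Sym2.eq_swap
                  simp [e] at hnd
            · -- to w_l
              cases q3 with
              | cons ha4 q4 =>
                rcases adj_w ha4 with rfl | ⟨p', rfl⟩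
                · cases q4 with
                  | nil =>
                    -- path v_i w_i w_m w_j v_j
                    have e : c s(vVtx i, wVtx i) = c s(wVtx j, vVtx j) := by
                      rw [Sym2.eq_swap (a := wVtx j) (b := vVtx j)]; exact h2
                    simp [e] at hnd
                  | cons ha5 q5 =>
                    simp [SimpleGraph.Walk.length_cons] at hlen; omega
                · cases q4 with
                  | cons ha5 q5 =>
                    simp [SimpleGraph.Walk.length_cons] at hlen; omega

/-- For every integer `k ≥ 17`, no edge coloring of `G_k` using at most 4 colors makes
`G_k` rainbow connected; that is, `rc(G_k) ≥ 5`. -/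
theorem Gk_not_rainbow_connected_with_four_colors (k : ℕ) (hk : 17 ≤ k) :
    ∀ c : Sym2 (Vk k) → Fin 4, ¬ RainbowConnected (Gk k) c := by
  intro c hRC
  obtain ⟨i, j, hij, hfij⟩ := Fintype.exists_ne_map_eq_of_card_lt
    (fun i : Fin k => (c s(uVtx k, vVtx i), c s(vVtx i, wVtx i))) (by simp; omega)
  have hne : vVtx i ≠ vVtx j := fun h => hij (by simpa [vVtx] using h)
  obtain ⟨p, _, hnd⟩ := hRC (vVtx i) (vVtx j) hne
  exact no_rainbow_path c hij (congrArg Prod.fst hfij) (congrArg Prod.snd hfij) p hnd
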